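/- Let G be a connected graph of goods and c > 0 a real number. If for every n-regular collection of n agents a c-sufficient allocation exists on G, then for every collection of n agents with arbitrary nonnegative additive utility functions a c-sufficient allocation exists on G. -/

import Mathlib

open scoped BigOperators

noncomputable section

/-- Total value of a bundle under an additive utility. -/
def bval {V : Type*} [DecidableEq V] (u : V → ℝ) (S : Finset V) : ℝ := ∑ v ∈ S, u v

/-- A `G`-bundle: a (possibly empty) set of vertices inducing a connected subgraph. -/
def IsBundle {V : Type*} (G : SimpleGraph V) (S : Finset V) : Prop :=
  (S : Set V) = ∅ ∨ (G.induce (S : Set V)).Connected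

/-- A split of the vertex set `A` into `n` pairwise disjoint `G`-bundles covering `A`. -/
def IsSplitOn {V : Type*} [DecidableEq V] (G : SimpleGraph V) (A : Finset V) (n : ℕ)
    (P : Fin n → Finset V) : Prop :=
  (∀ i, IsBundle G (P i)) ∧ (∀ i j, i ≠ j → Disjoint (P i) (P j)) ∧
  (∀ i, P i ⊆ A) ∧ (∀ v ∈ A, ∃ i, v ∈ P i)

/-- The maximin share over splits of `A` into `n` `G`-bundles. -/
def mmsOn {V : Type*} [DecidableEq V] (G : SimpleGraph V) (A : Finset V)
    (n : ℕ) (u : V → ℝ) : ℝ :=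
  sSup {q : ℝ | ∃ P : Fin n → Finset V, IsSplitOn G A n P ∧ ∀ i, q ≤ bval u (P i)}

/-- The maximin share `mms^(n)(G,u)`. -/
def mms {V : Type*} [DecidableEq V] [Fintype V] (G : SimpleGraph V)
    (n : ℕ) (u : V → ℝ) : ℝ := mmsOn G Finset.univ n u

/-- The cycle on `m` vertices, identified with `ZMod m`. -/
def cycleGraph (m : ℕ) : SimpleGraph (ZMod m) :=
  SimpleGraph.fromRel (fun v w => w = v + 1)

end

section Aux

variable {V : Type*} [DecidableEq V] [Fintype V] {G : SimpleGraph V} {n : ℕ}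

/-- the trivial split: everything to agent 0 -/
lemma exists_trivial_split (hG : G.Connected) (hn : 0 < n) :
    ∃ P : Fin n → Finset V, IsSplitOn G Finset.univ n P ∧
      (∀ i, P i = if i = ⟨0, hn⟩ then Finset.univ else ∅) := by
  refine ⟨fun i => if i = ⟨0, hn⟩ then Finset.univ else ∅, ⟨?_, ?_, ?_, ?_⟩, fun _ => rfl⟩
  · intro i
    dsimp only
    by_cases h : i = ⟨0, hn⟩
    · rw [if_pos h]
      right
      rw [Finset.coe_univ]
      exact (SimpleGraph.induceUnivIso G).connected_iff.mpr hG
    · rw [if_neg h]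
      left
      exact Finset.coe_empty
  · intro i j hij
    dsimp only
    by_cases h : i = ⟨0, hn⟩
    · have hj : ¬ j = ⟨0, hn⟩ := by rw [← h]; exact fun e => hij e.symm
      rw [if_pos h, if_neg hj]
      simp
    · rw [if_neg h]
      simp
  · intro i; exact Finset.subset_univ _
  · intro v _; exact ⟨⟨0, hn⟩, by simp⟩

lemma split_sum (u : V → ℝ) {P : Fin n → Finset V} (hP : IsSplitOn G Finset.univ n P) :
    ∑ i, bval u (P i) = bval u Finset.univ := by
  classical
  have hcover : (Finset.univ : Finset V) = Finset.univ.biUnion P := by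
    apply Finset.eq_of_subset_of_card_le
    · intro v hv
      obtain ⟨i, hi⟩ := hP.2.2.2 v hv
      exact Finset.mem_biUnion.mpr ⟨i, Finset.mem_univ i, hi⟩
    · exact Finset.card_le_card (Finset.subset_univ _)
  have hdisj : ((Finset.univ : Finset (Fin n)) : Set (Fin n)).PairwiseDisjoint P := by
    intro i _ j _ hij
    exact hP.2.1 i j hij
  rw [bval, hcover, Finset.sum_biUnion hdisj]
  rfl

lemma mms_bddAbove (hn : 0 < n) (u : V → ℝ) (hu : ∀ v, 0 ≤ u v) :
    BddAbove {q : ℝ | ∃ P : Fin n → Finset V, IsSplitOn G Finset.univ n P ∧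
      ∀ i, q ≤ bval u (P i)} := by
  refine ⟨bval u Finset.univ, fun q hq => ?_⟩
  obtain ⟨P, hP, hq⟩ := hq
  refine (hq ⟨0, hn⟩).trans ?_
  exact Finset.sum_le_sum_of_subset_of_nonneg (Finset.subset_univ _) (fun v _ _ => hu v)

lemma mms_attained (hG : G.Connected) (hn : 0 < n) (u : V → ℝ) (hu : ∀ v, 0 ≤ u v) :
    ∃ P : Fin n → Finset V, IsSplitOn G Finset.univ n P ∧
      ∀ i, mms G n u ≤ bval u (P i) := by
  classical
  set S := {q : ℝ | ∃ P : Fin n → Finset V, IsSplitOn G Finset.univ n P ∧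
      ∀ i, q ≤ bval u (P i)} with hS
  let Ps : Finset (Fin n → Finset V) := Finset.univ.filter (fun P => IsSplitOn G Finset.univ n P)
  obtain ⟨P₀, hP₀, _⟩ := exists_trivial_split hG hn
  have hPs : Ps.Nonempty := ⟨P₀, by simp [Ps, hP₀]⟩
  have hFin : (Finset.univ : Finset (Fin n)).Nonempty := ⟨⟨0, hn⟩, Finset.mem_univ _⟩
  set f : (Fin n → Finset V) → ℝ := fun P => Finset.univ.inf' hFin (fun i => bval u (P i))
  set m := Ps.sup' hPs f with hm
  obtain ⟨P, hPmem, hPf⟩ := Finset.exists_mem_eq_sup' hPs f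
  have hPsplit : IsSplitOn G Finset.univ n P := by simpa [Ps] using hPmem
  have hmemS : m ∈ S := by
    refine ⟨P, hPsplit, fun i => ?_⟩
    rw [hm, hPf]
    exact Finset.inf'_le _ (Finset.mem_univ i)
  have : mms G n u = m := by
    refine le_antisymm (csSup_le ⟨m, hmemS⟩ ?_) (le_csSup (mms_bddAbove hn u hu) hmemS)
    rintro q ⟨Q, hQ, hq⟩
    have : q ≤ f Q := Finset.le_inf' hFin _ (fun i _ => hq i)
    exact this.trans (Finset.le_sup' f (by simp [Ps, hQ]))
  obtain ⟨P', hP', h'⟩ := hmemS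
  exact ⟨P', hP', fun i => this ▸ h' i⟩

lemma mms_mul_le (hG : G.Connected) (hn : 0 < n) (u : V → ℝ) (hu : ∀ v, 0 ≤ u v) :
    (n : ℝ) * mms G n u ≤ bval u Finset.univ := by
  obtain ⟨P, hP, hle⟩ := mms_attained hG hn u hu
  calc (n : ℝ) * mms G n u = ∑ _i : Fin n, mms G n u := by
        simp [Finset.sum_const, nsmul_eq_mul]
    _ ≤ ∑ i, bval u (P i) := Finset.sum_le_sum (fun i _ => hle i)
    _ = bval u Finset.univ := split_sum u hP

/-- Regularization of a utility with positive mms. -/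
lemma exists_regularization (hG : G.Connected) (hn : 0 < n) (u : V → ℝ)
    (hu : ∀ v, 0 ≤ u v) (hμ : 0 < mms G n u) :
    ∃ u' : V → ℝ, (∀ v, 0 ≤ u' v) ∧ mms G n u' = 1 ∧ bval u' Finset.univ = (n : ℝ) ∧
      ∀ v, mms G n u * u' v ≤ u v := by
  classical
  obtain ⟨Q, hQ, hle⟩ := mms_attained hG hn u hu
  set μ := mms G n u with hμdef
  -- index of a vertex
  have hidx : ∀ v : V, ∃ i, v ∈ Q i := fun v => hQ.2.2.2 v (Finset.mem_univ v)
  choose idx hidxmem using hidx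
  have hidx_eq : ∀ {v : V} {j : Fin n}, v ∈ Q j → idx v = j := by
    intro v j hv
    by_contra h
    exact (Finset.disjoint_left.mp (hQ.2.1 _ _ h) (hidxmem v)) hv
  set u' : V → ℝ := fun v => u v / bval u (Q (idx v)) with hu'
  have hpos : ∀ j, 0 < bval u (Q j) := fun j => hμ.trans_le (hle j)
  have hu'nonneg : ∀ v, 0 ≤ u' v := fun v => div_nonneg (hu v) (hpos _).le
  have hbundleval : ∀ j, bval u' (Q j) = 1 := by
    intro j
    have : ∀ v ∈ Q j, u' v = u v / bval u (Q j) := by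
      intro v hv
      show u v / bval u (Q (idx v)) = u v / bval u (Q j)
      rw [hidx_eq hv]
    rw [bval, Finset.sum_congr rfl this, ← Finset.sum_div]
    exact div_self (hpos j).ne'
  have htotal : bval u' Finset.univ = (n : ℝ) := by
    rw [← split_sum u' hQ]
    simp [hbundleval]
  have hmms1 : mms G n u' = 1 := by
    have hge : (1 : ℝ) ≤ mms G n u' := by
      refine le_csSup (mms_bddAbove hn u' hu'nonneg) ⟨Q, hQ, fun i => ?_⟩
      rw [hbundleval]
    have hle1 : mms G n u' ≤ 1 := by
      have := mms_mul_le hG hn u' hu'nonneg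
      rw [htotal] at this
      have hn' : (0 : ℝ) < n := by exact_mod_cast hn
      nlinarith
    linarith
  refine ⟨u', hu'nonneg, hmms1, htotal, fun v => ?_⟩
  have h1 : u v = bval u (Q (idx v)) * u' v := by
    show u v = bval u (Q (idx v)) * (u v / bval u (Q (idx v)))
    rw [mul_div_cancel₀ _ (hpos _).ne']
  rw [h1]
  exact mul_le_mul_of_nonneg_right (hle _) (hu'nonneg v)

end Aux

/-- if `c`-sufficient allocations exist for every `n`-regular collection
of agents, then they exist for arbitrary nonnegative utility collections. -/
theorem stmt2 {V : Type*} [DecidableEq V] [Fintype V] (G : SimpleGraph V)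
    (hG : G.Connected) (n : ℕ) (c : ℝ) (hc : 0 < c)
    (hreg : ∀ us : Fin n → V → ℝ, (∀ i v, 0 ≤ us i v) →
      (∀ i, mms G n (us i) = 1 ∧ bval (us i) Finset.univ = (n : ℝ)) →
      ∃ P : Fin n → Finset V, IsSplitOn G Finset.univ n P ∧
        ∀ i, c * mms G n (us i) ≤ bval (us i) (P i)) :
    ∀ us : Fin n → V → ℝ, (∀ i v, 0 ≤ us i v) →
      ∃ P : Fin n → Finset V, IsSplitOn G Finset.univ n P ∧
        ∀ i, c * mms G n (us i) ≤ bval (us i) (P i) := by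
  classical
  intro us hus
  rcases Nat.eq_zero_or_pos n with hn | hn
  · subst hn
    obtain ⟨P, hP, _⟩ := hreg (fun _ _ => 0) (fun i => i.elim0) (fun i => i.elim0)
    exact ⟨P, hP, fun i => i.elim0⟩
  by_cases hall : ∀ i, mms G n (us i) ≤ 0
  · -- trivial split works
    obtain ⟨P, hP, _⟩ := exists_trivial_split hG hn
    refine ⟨P, hP, fun i => ?_⟩
    have h1 : c * mms G n (us i) ≤ 0 := mul_nonpos_of_nonneg_of_nonpos hc.le (hall i)
    have h2 : 0 ≤ bval (us i) (P i) := Finset.sum_nonneg (fun v _ => hus i v)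
    linarith
  · push_neg at hall
    obtain ⟨i₀, hi₀⟩ := hall
    -- regularize
    have hreg' : ∀ i, 0 < mms G n (us i) → ∃ u' : V → ℝ, (∀ v, 0 ≤ u' v) ∧
        mms G n u' = 1 ∧ bval u' Finset.univ = (n : ℝ) ∧
        ∀ v, mms G n (us i) * u' v ≤ us i v := fun i hi =>
      exists_regularization hG hn (us i) (hus i) hi
    choose u' hu'0 hu'1 hu'2 hu'3 using hreg'
    set us' : Fin n → V → ℝ := fun i =>
      if h : 0 < mms G n (us i) then u' i h else u' i₀ hi₀ with hus'def
    have h0 : ∀ i v, 0 ≤ us' i v := by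
      intro i v; rw [hus'def]; dsimp only
      split <;> [exact hu'0 _ _ v; exact hu'0 _ _ v]
    have h1 : ∀ i, mms G n (us' i) = 1 ∧ bval (us' i) Finset.univ = (n : ℝ) := by
      intro i; rw [hus'def]; dsimp only
      split <;> exact ⟨hu'1 _ _, hu'2 _ _⟩
    obtain ⟨P, hP, hPc⟩ := hreg us' h0 h1
    refine ⟨P, hP, fun i => ?_⟩
    by_cases hi : 0 < mms G n (us i)
    · have hc1 : c ≤ bval (us' i) (P i) := by
        have := hPc i; rwa [(h1 i).1, mul_one] at this
      have hchain : mms G n (us i) * bval (us' i) (P i) ≤ bval (us i) (P i) := by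
        rw [bval, bval, Finset.mul_sum]
        refine Finset.sum_le_sum (fun v _ => ?_)
        have := hu'3 i hi v
        simp only [hus'def, dif_pos hi]
        exact this
      calc c * mms G n (us i) = mms G n (us i) * c := mul_comm _ _
        _ ≤ mms G n (us i) * bval (us' i) (P i) := by
            exact mul_le_mul_of_nonneg_left hc1 hi.le
        _ ≤ bval (us i) (P i) := hchain
    · push_neg at hi
      have h2 : 0 ≤ bval (us i) (P i) := Finset.sum_nonneg (fun v _ => hus i v)
      nlinarith
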